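/- Let n ≥ 4 and 2 ≤ a ≤ n−1 be integers. Let S = ℂ[r₁,…,rₙ,u₁,…,uₙ] and let J̃ be the ideal generated by g̃_j := a·r_j·u_j^{a−1} − ∏_{k≠j} u_k for j = 1,…,n. If p₀, p₁, …, p_{n−2} are polynomials in ℂ[r₁,…,rₙ] such that Σ_{i=0}^{n−2} p_i·(r₁·u₁^a)^i lies in J̃, then p_i = 0 for every i. -/

import Mathlib

open MvPolynomial

/-- The element `g̃_j = a·r_j·u_j^{a−1} − ∏_{k≠j} u_k` of `S = ℂ[r₁,…,rₙ,u₁,…,uₙ]`,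
where `r_j` is the variable `X (Sum.inl j)` and `u_j` is the variable `X (Sum.inr j)`.
Up to sign, this is the partial derivative `∂Z̃^n_a/∂u_j` of
`Z̃^n_a = −u₁⋯uₙ + Σ_j r_j·u_j^a`. -/
noncomputable def gTilde (n a : ℕ) (j : Fin n) : MvPolynomial (Fin n ⊕ Fin n) ℂ :=
  (a : MvPolynomial (Fin n ⊕ Fin n) ℂ) * X (Sum.inl j) * X (Sum.inr j) ^ (a - 1)
    - ∏ k ∈ Finset.univ.erase j, X (Sum.inr k)

namespace NoLinRel

/-- Index type of the target polynomial ring: `none` is the "fuel" variable `X₀`,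
`some (inl j)` are the `Z j`, `some (inr j)` are the `Y j`. -/
abbrev tau (n : ℕ) := Option (Fin n ⊕ Fin n)

/-- The binomial generators `Z_j · X₀ · Y_j^(a-1) - ∏_{k≠j} Y_k`. -/
noncomputable def Gg (n a : ℕ) (j : Fin n) : MvPolynomial (tau n) ℂ :=
  X (some (Sum.inl j)) * X none * X (some (Sum.inr j)) ^ (a - 1)
    - ∏ k ∈ Finset.univ.erase j, X (some (Sum.inr k))

/-- The substitution `r_j ↦ a⁻¹ · Z_j · X₀`, `u_j ↦ Y_j`. -/
noncomputable def phim (n a : ℕ) : Fin n ⊕ Fin n → MvPolynomial (tau n) ℂ :=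
  Sum.elim (fun j => C ((a : ℂ)⁻¹) * (X (some (Sum.inl j)) * X none))
    (fun j => X (some (Sum.inr j)))

/-- exponent of the image of `r_j` -/
noncomputable def bZ (n : ℕ) (j : Fin n) : tau n →₀ ℕ :=
  Finsupp.single (some (Sum.inl j)) 1 + Finsupp.single none 1

/-- exponent of the image of `r_{j₀} u_{j₀}^a` -/
noncomputable def bB (n a : ℕ) (j₀ : Fin n) : tau n →₀ ℕ :=
  bZ n j₀ + Finsupp.single (some (Sum.inr j₀)) a

/-- exponent of the image of the monomial `r^m` -/
noncomputable def Er (n : ℕ) (m : Fin n →₀ ℕ) : tau n →₀ ℕ :=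
  ∑ j : Fin n, m j • bZ n j

/-- exponent of the image of `r^m · (r_{j₀} u_{j₀}^a)^i` -/
noncomputable def Efull (n a : ℕ) (j₀ : Fin n) (i : ℕ) (m : Fin n →₀ ℕ) : tau n →₀ ℕ :=
  Er n m + i • bB n a j₀

noncomputable def preE (n a : ℕ) (j : Fin n) : tau n →₀ ℕ :=
  Finsupp.single (some (Sum.inl j)) 1 + Finsupp.single none 1
    + Finsupp.single (some (Sum.inr j)) (a - 1)

noncomputable def postE (n : ℕ) (j : Fin n) : tau n →₀ ℕ :=
  ∑ k ∈ Finset.univ.erase j, Finsupp.single (some (Sum.inr k)) 1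

open Classical in
/-- The saturated-set indicator function.  Here `istar` is the target power,
`mstar` the target `r`-monomial, `fstar = |mstar| + istar` the total fuel. -/
noncomputable def wf (n a istar fstar : ℕ) (mstar : Fin n → ℕ) (e : tau n →₀ ℕ) : ℂ :=
  if ((∀ k : Fin n, (e (some (Sum.inr k)) + e none) % a = fstar % a)
      ∧ ((n - a) * e none + ∑ k : Fin n, e (some (Sum.inr k)) = (n - a) * fstar + a * istar)
      ∧ (e none ≤ fstar)
      ∧ (∀ k : Fin n, e (some (Sum.inr k)) + (∑ j : Fin n, e (some (Sum.inl j))) + a * mstar k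
            = a * e (some (Sum.inl k)) + fstar))
  then 1 else 0

/-- the functional -/
noncomputable def ell (n : ℕ) (w : (tau n →₀ ℕ) → ℂ) (q : MvPolynomial (tau n) ℂ) : ℂ :=
  ∑ e ∈ q.support, w e * q.coeff e

section lemmas

variable {n a : ℕ}

lemma ell_zero (w : (tau n →₀ ℕ) → ℂ) : ell n w 0 = 0 := by
  simp [ell]

lemma ell_monomial (w : (tau n →₀ ℕ) → ℂ) (u : tau n →₀ ℕ) (c : ℂ) :
    ell n w (monomial u c) = w u * c := by
  classical
  rcases eq_or_ne c 0 with rfl | hc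
  · simp [ell]
  · rw [ell, support_monomial, if_neg hc, Finset.sum_singleton, coeff_monomial, if_pos rfl]

lemma ell_add (w : (tau n →₀ ℕ) → ℂ) (q₁ q₂ : MvPolynomial (tau n) ℂ) :
    ell n w (q₁ + q₂) = ell n w q₁ + ell n w q₂ := by
  classical
  have key : ∀ q : MvPolynomial (tau n) ℂ, q.support ⊆ q₁.support ∪ q₂.support →
      ell n w q = ∑ e ∈ q₁.support ∪ q₂.support, w e * q.coeff e := by
    intro q hq
    rw [ell, Finset.sum_subset hq]
    intro x _ hx
    rw [notMem_support_iff.mp hx, mul_zero]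
  rw [key _ support_add, key q₁ Finset.subset_union_left,
    key q₂ Finset.subset_union_right, ← Finset.sum_add_distrib]
  congr 1; funext e
  rw [coeff_add]; ring

lemma ell_sum (w : (tau n →₀ ℕ) → ℂ) {ι : Type*} (s : Finset ι)
    (f : ι → MvPolynomial (tau n) ℂ) :
    ell n w (∑ x ∈ s, f x) = ∑ x ∈ s, ell n w (f x) := by
  classical
  induction s using Finset.cons_induction with
  | empty => simp [ell]
  | cons x s hx ih => rw [Finset.sum_cons, ell_add, ih, Finset.sum_cons]


lemma ell_neg (w : (tau n →₀ ℕ) → ℂ) (q : MvPolynomial (tau n) ℂ) :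
    ell n w (-q) = - ell n w q := by
  classical
  rw [ell, ell, support_neg, ← Finset.sum_neg_distrib]
  congr 1; funext e
  rw [coeff_neg]; ring

lemma ell_sub (w : (tau n →₀ ℕ) → ℂ) (q₁ q₂ : MvPolynomial (tau n) ℂ) :
    ell n w (q₁ - q₂) = ell n w q₁ - ell n w q₂ := by
  rw [sub_eq_add_neg, ell_add, ell_neg, sub_eq_add_neg]

lemma prod_monomial {ι : Type*} (s : Finset ι) (u : ι → tau n →₀ ℕ) (c : ι → ℂ) :
    ∏ x ∈ s, (monomial (u x) (c x) : MvPolynomial (tau n) ℂ)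
      = monomial (∑ x ∈ s, u x) (∏ x ∈ s, c x) := by
  classical
  induction s using Finset.cons_induction with
  | empty => simp
  | cons x s hx ih =>
      rw [Finset.prod_cons, ih, monomial_mul, Finset.sum_cons, Finset.prod_cons]

lemma X_as_monomial (s : tau n) :
    (X s : MvPolynomial (tau n) ℂ) = monomial (Finsupp.single s 1) 1 := rfl

lemma Gg_eq (ha : 1 ≤ a) (j : Fin n) :
    Gg n a j = monomial (preE n a j) 1 - monomial (postE n j) 1 := by
  rw [Gg, preE, postE, X_as_monomial, X_as_monomial, X_pow_eq_monomial,
    monomial_mul, monomial_mul]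
  congr 1
  · rw [mul_one, mul_one]
  · rw [show (monomial (∑ k ∈ Finset.univ.erase j, Finsupp.single (some (Sum.inr k)) 1)
        (1:ℂ)) = monomial (∑ k ∈ Finset.univ.erase j, Finsupp.single (some (Sum.inr k)) 1)
        (∏ _k ∈ Finset.univ.erase j, (1:ℂ)) by rw [Finset.prod_const_one],
      ← prod_monomial]
    exact Finset.prod_congr rfl fun k _ => X_as_monomial _


lemma preE_none (j : Fin n) : preE n a j none = 1 := by
  simp [preE, Finsupp.single_apply]

lemma preE_inl (j k : Fin n) : preE n a j (some (Sum.inl k)) = if j = k then 1 else 0 := by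
  simp [preE, Finsupp.single_apply]

lemma preE_inr (j k : Fin n) : preE n a j (some (Sum.inr k)) = if j = k then a - 1 else 0 := by
  simp only [preE, Finsupp.add_apply, Finsupp.single_apply]
  split_ifs with h <;> simp_all

lemma postE_none (j : Fin n) : postE n j none = 0 := by
  classical
  simp [postE, Finsupp.finset_sum_apply, Finsupp.single_apply]

lemma postE_inl (j k : Fin n) : postE n j (some (Sum.inl k)) = 0 := by
  classical
  simp [postE, Finsupp.finset_sum_apply, Finsupp.single_apply]

lemma postE_inr (j k : Fin n) : postE n j (some (Sum.inr k)) = if j = k then 0 else 1 := by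
  classical
  rw [postE, Finsupp.finset_sum_apply]
  simp only [Finsupp.single_apply, Option.some.injEq, Sum.inr.injEq]
  by_cases h : j = k
  · subst h
    rw [if_pos rfl]
    apply Finset.sum_eq_zero
    intro x hx
    exact if_neg fun hxj => (Finset.mem_erase.mp hx).1 hxj
  · rw [if_neg h, Finset.sum_ite_eq' (Finset.univ.erase j) k (fun _ => 1), if_pos
      (Finset.mem_erase.mpr ⟨fun hkj => h hkj.symm, Finset.mem_univ k⟩)]

lemma sum_ite_card (j : Fin n) : ∑ k : Fin n, (if j = k then (0:ℕ) else 1) = n - 1 := by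
  classical
  have h1 : ∑ k : Fin n, ((if j = k then (0:ℕ) else 1) + (if j = k then 1 else 0)) = n := by
    have : ∀ k : Fin n, ((if j = k then (0:ℕ) else 1) + (if j = k then 1 else 0)) = 1 := by
      intro k; by_cases h : j = k <;> simp [h]
    simp only [this, Finset.sum_const, Finset.card_univ, Fintype.card_fin, smul_eq_mul, mul_one]
  rw [Finset.sum_add_distrib] at h1
  rw [Finset.sum_ite_eq Finset.univ j (fun _ => (1:ℕ)), if_pos (Finset.mem_univ j)] at h1
  omega

/-- The key saturation property of the indicator `wf`. -/
lemma wf_sat (hn : 4 ≤ n) (ha : 2 ≤ a) (han : a ≤ n - 1) {istar fstar : ℕ}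
    (histar : istar ≤ n - 2) (mstar : Fin n → ℕ) (e : tau n →₀ ℕ) (j : Fin n) :
    wf n a istar fstar mstar (e + preE n a j) = wf n a istar fstar mstar (e + postE n j) := by
  classical
  set Y : Fin n → ℕ := fun k => e (some (Sum.inr k)) with hY
  set Z : Fin n → ℕ := fun k => e (some (Sum.inl k)) with hZ
  set c : ℕ := e none with hc
  have hPn : (e + preE n a j) none = c + 1 := by rw [Finsupp.add_apply, preE_none]
  have hQn : (e + postE n j) none = c := by rw [Finsupp.add_apply, postE_none, add_zero]
  have hPy : ∀ k, (e + preE n a j) (some (Sum.inr k)) = Y k + if j = k then a - 1 else 0 :=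
    fun k => by rw [Finsupp.add_apply, preE_inr]
  have hQy : ∀ k, (e + postE n j) (some (Sum.inr k)) = Y k + if j = k then 0 else 1 :=
    fun k => by rw [Finsupp.add_apply, postE_inr]
  have hPz : ∀ k, (e + preE n a j) (some (Sum.inl k)) = Z k + if j = k then 1 else 0 :=
    fun k => by rw [Finsupp.add_apply, preE_inl]
  have hQz : ∀ k, (e + postE n j) (some (Sum.inl k)) = Z k := fun k => by
    rw [Finsupp.add_apply, postE_inl, add_zero]
  have hSPy : ∑ k : Fin n, (e + preE n a j) (some (Sum.inr k)) = (∑ k, Y k) + (a - 1) := by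
    simp_rw [hPy]
    rw [Finset.sum_add_distrib, Finset.sum_ite_eq Finset.univ j (fun _ => a - 1),
      if_pos (Finset.mem_univ j)]
  have hSQy : ∑ k : Fin n, (e + postE n j) (some (Sum.inr k)) = (∑ k, Y k) + (n - 1) := by
    simp_rw [hQy]
    rw [Finset.sum_add_distrib, sum_ite_card]
  have hSPz : ∑ k : Fin n, (e + preE n a j) (some (Sum.inl k)) = (∑ k, Z k) + 1 := by
    simp_rw [hPz]
    rw [Finset.sum_add_distrib, Finset.sum_ite_eq Finset.univ j (fun _ => 1),
      if_pos (Finset.mem_univ j)]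
  have hSQz : ∑ k : Fin n, (e + postE n j) (some (Sum.inl k)) = ∑ k, Z k := by
    simp_rw [hQz]
  rw [wf, wf]
  by_cases hcf : c + 1 ≤ fstar
  · -- all four conditions are equivalent
    apply if_congr _ rfl rfl
    rw [hPn, hQn, hSPy, hSQy, hSPz, hSQz]
    constructor
    · rintro ⟨h1, h3, -, h5⟩
      refine ⟨?_, ?_, by omega, ?_⟩
      · intro k
        rw [hQy]
        have := h1 k
        rw [hPy k] at this
        by_cases hk : j = k
        · simp only [if_pos hk, add_zero] at this ⊢
          have harg : Y k + (a - 1) + (c + 1) = Y k + c + a := by omega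
          rw [harg, Nat.add_mod_right] at this
          exact this
        · simp only [if_neg hk, add_zero] at this ⊢
          have harg : Y k + (c + 1) = Y k + 1 + c := by omega
          rwa [harg] at this
      · have hms : (n - a) * (c + 1) = (n - a) * c + (n - a) := by
          rw [Nat.mul_add, Nat.mul_one]
        rw [hms] at h3
        omega
      · intro k
        have := h5 k
        rw [hPy k, hPz k] at this
        rw [hQy k, hQz k]
        by_cases hk : j = k
        · simp only [if_pos hk, add_zero] at this ⊢
          rw [Nat.mul_add, Nat.mul_one] at this
          omega
        · simp only [if_neg hk, add_zero] at this ⊢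
          omega
    · rintro ⟨h1, h3, -, h5⟩
      refine ⟨?_, ?_, hcf, ?_⟩
      · intro k
        rw [hPy]
        have := h1 k
        rw [hQy k] at this
        by_cases hk : j = k
        · simp only [if_pos hk, add_zero] at this ⊢
          have harg : Y k + (a - 1) + (c + 1) = Y k + c + a := by omega
          rw [harg, Nat.add_mod_right]
          exact this
        · simp only [if_neg hk, add_zero] at this ⊢
          have harg : Y k + (c + 1) = Y k + 1 + c := by omega
          rwa [harg]
      · have hms : (n - a) * (c + 1) = (n - a) * c + (n - a) := by
          rw [Nat.mul_add, Nat.mul_one]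
        rw [hms]
        omega
      · intro k
        have := h5 k
        rw [hQy k, hQz k] at this
        rw [hPy k, hPz k]
        by_cases hk : j = k
        · simp only [if_pos hk, add_zero] at this ⊢
          rw [Nat.mul_add, Nat.mul_one]
          omega
        · simp only [if_neg hk, add_zero] at this ⊢
          omega
  · -- c + 1 > fstar : both sides are 0
    rw [if_neg, if_neg]
    · -- post side: show conditions cannot all hold
      rintro ⟨h1, h3, h4, -⟩
      rw [hQn] at h4
      have hceq : c = fstar := by omega
      -- each Y k + ite is divisible by a
      have hdvd : ∀ k : Fin n, a ∣ (Y k + if j = k then 0 else 1) := by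
        intro k
        have := h1 k
        rw [hQy k, hQn, hceq] at this
        have hmod : (Y k + (if j = k then 0 else 1)) % a = 0 % a := by
          have h2 : ((Y k + if j = k then 0 else 1) + fstar) % a = (0 + fstar) % a := by
            rw [zero_add]; exact this
          exact Nat.ModEq.add_right_cancel' fstar h2
        rw [Nat.zero_mod] at hmod
        exact Nat.dvd_iff_mod_eq_zero.mpr hmod
      have hge : ∀ k ∈ Finset.univ.erase j, a ≤ Y k + if j = k then 0 else 1 := by
        intro k hk
        have hkj : ¬ (j = k) := fun h => (Finset.mem_erase.mp hk).1 h.symm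
        refine Nat.le_of_dvd ?_ (hdvd k)
        rw [if_neg hkj]; omega
      have hsum : ∑ k : Fin n, (e + postE n j) (some (Sum.inr k)) = a * istar := by
        rw [hQn, hceq] at h3
        omega
      have hbig : (n - 1) * a ≤ ∑ k : Fin n, (e + postE n j) (some (Sum.inr k)) := by
        calc (n - 1) * a = ∑ _k ∈ Finset.univ.erase j, a := by
              rw [Finset.sum_const, Finset.card_erase_of_mem (Finset.mem_univ j),
                Finset.card_univ, Fintype.card_fin, smul_eq_mul]
          _ ≤ ∑ k ∈ Finset.univ.erase j, (Y k + if j = k then 0 else 1) :=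
              Finset.sum_le_sum hge
          _ ≤ ∑ k : Fin n, (Y k + if j = k then 0 else 1) :=
              Finset.sum_le_sum_of_subset (Finset.subset_univ _)
          _ = ∑ k : Fin n, (e + postE n j) (some (Sum.inr k)) := by
              exact Finset.sum_congr rfl fun k _ => (hQy k).symm
      rw [hsum] at hbig
      -- (n-1) * a ≤ a * istar with istar ≤ n - 2 : contradiction
      have : (n - 1) * a ≤ a * (n - 2) :=
        le_trans hbig (Nat.mul_le_mul_left a histar)
      rw [mul_comm] at this
      have := Nat.le_of_mul_le_mul_left this (by omega : 0 < a)
      omega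
    · rintro ⟨-, -, h4, -⟩
      rw [hPn] at h4
      omega


lemma ell_mul_G (ha1 : 1 ≤ a) (w : (tau n →₀ ℕ) → ℂ)
    (hw : ∀ (e : tau n →₀ ℕ) (j : Fin n), w (e + preE n a j) = w (e + postE n j))
    (h : MvPolynomial (tau n) ℂ) (j : Fin n) :
    ell n w (h * Gg n a j) = 0 := by
  induction h using MvPolynomial.induction_on' with
  | monomial u c =>
      rw [Gg_eq ha1, mul_sub, monomial_mul, monomial_mul, ell_sub, ell_monomial, ell_monomial,
        hw u j, mul_one]
      ring
  | add p q hp hq =>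
      rw [add_mul, ell_add, hp, hq, add_zero]

lemma ell_span (ha1 : 1 ≤ a) (w : (tau n →₀ ℕ) → ℂ)
    (hw : ∀ (e : tau n →₀ ℕ) (j : Fin n), w (e + preE n a j) = w (e + postE n j))
    {F : MvPolynomial (tau n) ℂ} (hF : F ∈ Ideal.span (Set.range (Gg n a))) :
    ell n w F = 0 := by
  rw [Ideal.span] at hF
  obtain ⟨cf, hc⟩ := (Submodule.mem_span_range_iff_exists_fun (MvPolynomial (tau n) ℂ)).mp hF
  rw [← hc, ell_sum]
  apply Finset.sum_eq_zero
  intro j _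
  rw [smul_eq_mul]
  exact ell_mul_G ha1 w hw (cf j) j

lemma aeval_gTilde (ha2 : 2 ≤ a) (j : Fin n) :
    aeval (phim n a) (gTilde n a j) = Gg n a j := by
  have hane : (a : ℂ) ≠ 0 := Nat.cast_ne_zero.mpr (by omega)
  rw [gTilde, map_sub, map_mul, map_mul, map_pow, map_natCast, aeval_X, aeval_X, map_prod]
  simp only [aeval_X, phim, Sum.elim_inl, Sum.elim_inr]
  rw [Gg]
  rw [sub_left_inj]
  rw [← map_natCast (C : ℂ →+* MvPolynomial (tau n) ℂ) a, ← mul_assoc, ← mul_assoc, ← C_mul,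
    mul_inv_cancel₀ hane, C_1, one_mul]

lemma image_mem (ha2 : 2 ≤ a) {F : MvPolynomial (Fin n ⊕ Fin n) ℂ}
    (hF : F ∈ Ideal.span (Set.range (gTilde n a))) :
    aeval (phim n a) F ∈ Ideal.span (Set.range (Gg n a)) := by
  have h2 := Ideal.mem_map_of_mem (aeval (phim n a)).toRingHom hF
  rw [Ideal.map_span, ← Set.range_comp] at h2
  have hrange : (⇑(aeval (phim n a)).toRingHom ∘ gTilde n a) = Gg n a :=
    funext fun j => by
      rw [Function.comp_apply, AlgHom.toRingHom_eq_coe, RingHom.coe_coe]; exact aeval_gTilde ha2 j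
  rwa [hrange] at h2


lemma bZ_none (j : Fin n) : bZ n j none = 1 := by
  simp [bZ, Finsupp.single_apply]

lemma bZ_inl (j k : Fin n) : bZ n j (some (Sum.inl k)) = if j = k then 1 else 0 := by
  simp [bZ, Finsupp.single_apply]

lemma bZ_inr (j k : Fin n) : bZ n j (some (Sum.inr k)) = 0 := by
  simp [bZ, Finsupp.single_apply]

lemma bB_none (j₀ : Fin n) : bB n a j₀ none = 1 := by
  simp [bB, bZ_none, Finsupp.single_apply]

lemma bB_inl (j₀ k : Fin n) : bB n a j₀ (some (Sum.inl k)) = if j₀ = k then 1 else 0 := by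
  simp [bB, bZ_inl, Finsupp.single_apply]

lemma bB_inr (j₀ k : Fin n) : bB n a j₀ (some (Sum.inr k)) = if j₀ = k then a else 0 := by
  simp [bB, bZ_inr, Finsupp.single_apply]

lemma Efull_none (j₀ : Fin n) (i : ℕ) (m : Fin n →₀ ℕ) :
    Efull n a j₀ i m none = (∑ k, m k) + i := by
  rw [Efull, Finsupp.add_apply, Er, Finsupp.finset_sum_apply, Finsupp.smul_apply, bB_none,
    smul_eq_mul, mul_one]
  congr 1
  refine Finset.sum_congr rfl fun k _ => ?_
  rw [Finsupp.smul_apply, bZ_none, smul_eq_mul, mul_one]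

lemma Efull_inl (j₀ : Fin n) (i : ℕ) (m : Fin n →₀ ℕ) (k : Fin n) :
    Efull n a j₀ i m (some (Sum.inl k)) = m k + if j₀ = k then i else 0 := by
  classical
  rw [Efull, Finsupp.add_apply, Er, Finsupp.finset_sum_apply, Finsupp.smul_apply, bB_inl,
    smul_eq_mul, mul_ite, mul_one, mul_zero]
  congr 1
  have : ∀ j : Fin n, (m j • bZ n j) (some (Sum.inl k)) = if j = k then m j else 0 := by
    intro j
    rw [Finsupp.smul_apply, bZ_inl, smul_eq_mul, mul_ite, mul_one, mul_zero]
  simp only [this]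
  rw [Finset.sum_ite_eq' Finset.univ k (fun j => m j), if_pos (Finset.mem_univ k)]

lemma Efull_inr (j₀ : Fin n) (i : ℕ) (m : Fin n →₀ ℕ) (k : Fin n) :
    Efull n a j₀ i m (some (Sum.inr k)) = if j₀ = k then i * a else 0 := by
  rw [Efull, Finsupp.add_apply, Er, Finsupp.finset_sum_apply, Finsupp.smul_apply, bB_inr,
    smul_eq_mul, mul_ite, mul_zero]
  have : ∀ j : Fin n, (m j • bZ n j) (some (Sum.inr k)) = 0 := by
    intro j
    rw [Finsupp.smul_apply, bZ_inr, smul_eq_mul, mul_zero]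
  simp only [this]
  rw [Finset.sum_const_zero, zero_add]

lemma Efull_sum_inr (j₀ : Fin n) (i : ℕ) (m : Fin n →₀ ℕ) :
    ∑ k, Efull n a j₀ i m (some (Sum.inr k)) = i * a := by
  simp only [Efull_inr]
  rw [Finset.sum_ite_eq Finset.univ j₀ (fun _ => i * a), if_pos (Finset.mem_univ j₀)]

lemma Efull_sum_inl (j₀ : Fin n) (i : ℕ) (m : Fin n →₀ ℕ) :
    ∑ k, Efull n a j₀ i m (some (Sum.inl k)) = (∑ k, m k) + i := by
  simp only [Efull_inl]
  rw [Finset.sum_add_distrib, Finset.sum_ite_eq Finset.univ j₀ (fun _ => i),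
    if_pos (Finset.mem_univ j₀)]

/-- pure arithmetic helper -/
lemma arith_fstar {n a sm istar d : ℕ} (h : a ≤ n) :
    (sm + n * d) + istar = (sm + (istar + (n - a) * d)) + a * d := by
  zify [h]
  ring

lemma arith_cond3 {n a sm istar d : ℕ} (h : a ≤ n) :
    (n - a) * (sm + (istar + (n - a) * d)) + (istar + (n - a) * d) * a
      = (n - a) * ((sm + n * d) + istar) + a * istar := by
  zify [h]
  ring

/-- Value of `wf` on the special exponents, positive case. -/
lemma wf_Efull_one (han : a ≤ n) (j₀ : Fin n)
    (istar : ℕ) (mstar : Fin n →₀ ℕ) (d i : ℕ) (m : Fin n →₀ ℕ)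
    (hM : ∀ k, m k + d = mstar k) (hI : i = istar + (n - a) * d) :
    wf n a istar ((∑ k, mstar k) + istar) (fun k => mstar k) (Efull n a j₀ i m) = 1 := by
  have hsum : (∑ k, mstar k) = (∑ k, m k) + n * d := by
    calc ∑ k, mstar k = ∑ k : Fin n, (m k + d) := Finset.sum_congr rfl fun k _ => (hM k).symm
      _ = (∑ k, m k) + n * d := by
          rw [Finset.sum_add_distrib, Finset.sum_const, Finset.card_univ, Fintype.card_fin,
            smul_eq_mul]
  have hfs : (∑ k, mstar k) + istar = ((∑ k, m k) + i) + a * d := by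
    rw [hsum, hI]; exact arith_fstar han
  rw [wf, if_pos]
  refine ⟨?_, ?_, ?_, ?_⟩
  · intro k
    rw [Efull_inr, Efull_none, hfs]
    by_cases hk : j₀ = k
    · rw [if_pos hk, Nat.add_comm (i * a), Nat.add_mul_mod_self_right,
        Nat.add_mul_mod_self_left]
    · rw [if_neg hk, Nat.zero_add, Nat.add_mul_mod_self_left]
  · rw [Efull_none, Efull_sum_inr, hsum, hI]
    exact arith_cond3 han
  · rw [Efull_none, hfs]; omega
  · intro k
    rw [Efull_inr, Efull_sum_inl, Efull_inl, hfs]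
    have hmk := hM k
    by_cases hk : j₀ = k
    · rw [if_pos hk, if_pos hk]
      have h1m : a * (m k + i) = a * m k + a * i := Nat.mul_add _ _ _
      have h2m : a * mstar k = a * m k + a * d := by rw [← hmk, Nat.mul_add]
      have h3m : i * a = a * i := Nat.mul_comm _ _
      omega
    · rw [if_neg hk, if_neg hk]
      have h2m : a * mstar k = a * m k + a * d := by rw [← hmk, Nat.mul_add]
      have h1m : a * (m k + 0) = a * m k := by rw [Nat.add_zero]
      omega

/-- Value of `wf` on the special exponents: if nonzero, the parameters lie on the chain. -/
lemma wf_Efull_exists (ha2 : 2 ≤ a) (han : a ≤ n) (j₀ : Fin n)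
    (istar : ℕ) (mstar : Fin n →₀ ℕ) (i : ℕ) (m : Fin n →₀ ℕ)
    (hne : wf n a istar ((∑ k, mstar k) + istar) (fun k => mstar k) (Efull n a j₀ i m) ≠ 0) :
    ∃ d : ℕ, (∀ k, m k + d = mstar k) ∧ i = istar + (n - a) * d := by
  rw [wf] at hne
  split_ifs at hne with hP
  swap
  · exact absurd rfl hne
  obtain ⟨h1, h3, h4, h5⟩ := hP
  rw [Efull_none] at h4
  have h1' := h1 j₀
  rw [Efull_inr, Efull_none, if_pos rfl, Nat.add_comm (i * a),
    Nat.add_mul_mod_self_right] at h1'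
  have hdvd : a ∣ ((∑ k, mstar k) + istar) - ((∑ k, m k) + i) :=
    (Nat.modEq_iff_dvd' h4).mp h1'
  obtain ⟨d, hd⟩ := hdvd
  have hfs : (∑ k, mstar k) + istar = ((∑ k, m k) + i) + a * d := by omega
  have hM : ∀ k, m k + d = mstar k := by
    intro k
    have h5' := h5 k
    rw [Efull_inr, Efull_sum_inl, Efull_inl] at h5'
    by_cases hk : j₀ = k
    · rw [if_pos hk, if_pos hk] at h5'
      have h1m : a * (m k + i) = a * m k + a * i := Nat.mul_add _ _ _
      have h3m : i * a = a * i := Nat.mul_comm _ _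
      have key : a * (m k + d) = a * mstar k := by rw [Nat.mul_add]; omega
      exact Nat.eq_of_mul_eq_mul_left (by omega) key
    · rw [if_neg hk, if_neg hk] at h5'
      have h1m : a * (m k + 0) = a * m k := by rw [Nat.add_zero]
      have key : a * (m k + d) = a * mstar k := by rw [Nat.mul_add]; omega
      exact Nat.eq_of_mul_eq_mul_left (by omega) key
  refine ⟨d, hM, ?_⟩
  have hsum : (∑ k, mstar k) = (∑ k, m k) + n * d := by
    calc ∑ k, mstar k = ∑ k : Fin n, (m k + d) := Finset.sum_congr rfl fun k _ => (hM k).symm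
      _ = (∑ k, m k) + n * d := by
          rw [Finset.sum_add_distrib, Finset.sum_const, Finset.card_univ, Fintype.card_fin,
            smul_eq_mul]
  have hsub : (n - a) * d = n * d - a * d := Nat.sub_mul _ _ _
  have hba : a * d ≤ n * d := Nat.mul_le_mul_right d han
  omega

lemma phim_inl (j : Fin n) : phim n a (Sum.inl j) = monomial (bZ n j) ((a : ℂ)⁻¹) := by
  rw [phim, Sum.elim_inl, X_as_monomial, X_as_monomial, monomial_mul, C_apply, monomial_mul, bZ,
    zero_add, mul_one, mul_one]

lemma phim_inr (j : Fin n) : phim n a (Sum.inr j) = X (some (Sum.inr j)) := rfl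

lemma aeval_beta (j₀ : Fin n) :
    (aeval (phim n a)) ((X (Sum.inl j₀) * X (Sum.inr j₀) ^ a : MvPolynomial (Fin n ⊕ Fin n) ℂ))
      = monomial (bB n a j₀) ((a : ℂ)⁻¹) := by
  rw [map_mul, map_pow, aeval_X, aeval_X, phim_inl, phim_inr, X_pow_eq_monomial, monomial_mul,
    mul_one, bB]

lemma aeval_beta_pow (j₀ : Fin n) (i : ℕ) :
    (aeval (phim n a)) (((X (Sum.inl j₀) * X (Sum.inr j₀) ^ a : MvPolynomial (Fin n ⊕ Fin n) ℂ)) ^ i)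
      = monomial (i • bB n a j₀) ((a : ℂ)⁻¹ ^ i) := by
  rw [map_pow, aeval_beta, monomial_pow]

lemma aeval_rename_part (q : MvPolynomial (Fin n) ℂ) :
    aeval (phim n a) (rename Sum.inl q)
      = ∑ m ∈ q.support, monomial (Er n m) (coeff m q * (a : ℂ)⁻¹ ^ (∑ k, m k)) := by
  rw [aeval_rename]
  conv_lhs => rw [q.as_sum]
  rw [map_sum]
  refine Finset.sum_congr rfl fun m hm => ?_
  rw [aeval_monomial, Finsupp.prod]
  have hfac : ∀ j ∈ m.support, ((phim n a ∘ Sum.inl) j) ^ m j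
      = monomial ((m j) • bZ n j) ((a : ℂ)⁻¹ ^ m j) := fun j _ => by
    rw [Function.comp_apply, phim_inl, monomial_pow]
  rw [Finset.prod_congr rfl hfac, prod_monomial,
    Finset.sum_subset (Finset.subset_univ m.support) (fun x _ hx => by
      rw [Finsupp.notMem_support_iff.mp hx, zero_smul]),
    Finset.prod_subset (Finset.subset_univ m.support) (fun x _ hx => by
      rw [Finsupp.notMem_support_iff.mp hx, pow_zero]),
    Finset.prod_pow_eq_pow_sum, algebraMap_eq, C_mul_monomial, Er]

lemma master (ha2 : 2 ≤ a) (j₀ : Fin n) (p : Fin (n - 1) → MvPolynomial (Fin n) ℂ)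
    (hmem : (∑ i, rename Sum.inl (p i) *
        (X (Sum.inl j₀) * X (Sum.inr j₀) ^ a) ^ (i : ℕ))
      ∈ Ideal.span (Set.range (gTilde n a)))
    (w : (tau n →₀ ℕ) → ℂ)
    (hw : ∀ (e : tau n →₀ ℕ) (j : Fin n), w (e + preE n a j) = w (e + postE n j)) :
    ∑ i : Fin (n - 1), ∑ m ∈ (p i).support,
      w (Efull n a j₀ (i : ℕ) m) * (coeff m (p i) * (a : ℂ)⁻¹ ^ ((∑ k, m k) + (i : ℕ))) = 0 := by
  have h0 : ell n w (aeval (phim n a) (∑ i, rename Sum.inl (p i) *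
      (X (Sum.inl j₀) * X (Sum.inr j₀) ^ a) ^ (i : ℕ))) = 0 :=
    ell_span (by omega) w hw (image_mem ha2 hmem)
  rw [map_sum] at h0
  have hterm : ∀ i : Fin (n - 1),
      aeval (phim n a) (rename Sum.inl (p i) * (X (Sum.inl j₀) * X (Sum.inr j₀) ^ a) ^ (i : ℕ))
        = ∑ m ∈ (p i).support,
            monomial (Efull n a j₀ (i : ℕ) m)
              (coeff m (p i) * (a : ℂ)⁻¹ ^ ((∑ k, m k) + (i : ℕ))) := by
    intro i
    rw [map_mul, aeval_rename_part, aeval_beta_pow, Finset.sum_mul]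
    refine Finset.sum_congr rfl fun m hm => ?_
    rw [monomial_mul, pow_add, ← mul_assoc]
    rfl
  rw [Finset.sum_congr rfl (fun i _ => hterm i), ell_sum] at h0
  rw [← h0]
  refine Finset.sum_congr rfl fun i _ => ?_
  rw [ell_sum]
  exact Finset.sum_congr rfl fun m _ => (ell_monomial _ _ _).symm
end lemmas

end NoLinRel

/-- For `n ≥ 4` and `2 ≤ a ≤ n−1`: if `p₀,…,p_{n−2} ∈ ℂ[r₁,…,rₙ]` are such
that `Σ_{i=0}^{n−2} p_i·(r₁·u₁^a)^i` lies in the ideal `J̃ = (g̃₁,…,g̃ₙ)` of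
`S = ℂ[r₁,…,rₙ,u₁,…,uₙ]`, then all `p_i = 0`. Here `ℂ[r₁,…,rₙ]` is embedded into `S`
by renaming the variables along `Sum.inl`. -/
theorem no_linear_relations_in_jacobian_ring (n a : ℕ) (hn : 4 ≤ n) (ha : 2 ≤ a)
    (han : a ≤ n - 1) (p : Fin (n - 1) → MvPolynomial (Fin n) ℂ)
    (hmem : (∑ i, rename Sum.inl (p i) *
        (X (Sum.inl (⟨0, by omega⟩ : Fin n)) *
          X (Sum.inr (⟨0, by omega⟩ : Fin n)) ^ a) ^ (i : ℕ))
      ∈ Ideal.span (Set.range (gTilde n a))) :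
    ∀ i, p i = 0 := by
  classical
  open NoLinRel in
  suffices H : ∀ (K : ℕ) (i : Fin (n - 1)), (n - 1) - (i : ℕ) ≤ K → p i = 0 by
    intro i; exact H ((n - 1) - (i : ℕ)) i le_rfl
  intro K
  induction K using Nat.strong_induction_on with
  | _ K IH =>
    intro i hK
    apply MvPolynomial.ext
    intro mstar
    rw [coeff_zero]
    by_cases hsupp : mstar ∈ (p i).support
    swap
    · exact MvPolynomial.notMem_support_iff.mp hsupp
    · have hile : (i : ℕ) ≤ n - 2 := by have := i.isLt; omega
      have hw : ∀ (e : tau n →₀ ℕ) (j : Fin n),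
          wf n a (i : ℕ) ((∑ k, mstar k) + (i : ℕ)) (fun k => mstar k) (e + preE n a j)
            = wf n a (i : ℕ) ((∑ k, mstar k) + (i : ℕ)) (fun k => mstar k) (e + postE n j) :=
        fun e j => wf_sat hn ha han hile _ e j
      have hmaster := master ha (⟨0, by omega⟩ : Fin n) p hmem _ hw
      rw [Finset.sum_eq_single_of_mem i (Finset.mem_univ i) ?hother] at hmaster
      rw [Finset.sum_eq_single_of_mem mstar hsupp ?hotherm] at hmaster
      · rw [wf_Efull_one (by omega : a ≤ n) _ (i : ℕ) mstar 0 (i : ℕ) mstar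
            (fun k => by rw [Nat.add_zero]) (by rw [Nat.mul_zero, Nat.add_zero]),
            one_mul] at hmaster
        have hpow : ((a : ℂ)⁻¹ ^ ((∑ k, mstar k) + (i : ℕ))) ≠ 0 :=
          pow_ne_zero _ (inv_ne_zero (Nat.cast_ne_zero.mpr (by omega)))
        exact (mul_eq_zero.mp hmaster).resolve_right hpow
      case hotherm =>
        intro m hm hne
        by_cases hz : wf n a (i : ℕ) ((∑ k, mstar k) + (i : ℕ)) (fun k => mstar k)
            (Efull n a (⟨0, by omega⟩ : Fin n) (i : ℕ) m) = 0
        · rw [hz, zero_mul]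
        · obtain ⟨d, hMd, hId⟩ :=
            wf_Efull_exists ha (by omega) _ (i : ℕ) mstar (i : ℕ) m hz
          have h2 : (n - a) * d = 0 := by omega
          have hd0 : d = 0 := by
            rcases Nat.mul_eq_zero.mp h2 with h | h
            · omega
            · exact h
          exact absurd (Finsupp.ext fun k => by have := hMd k; omega) hne
      case hother =>
        intro i' _ hne
        apply Finset.sum_eq_zero
        intro m hm
        by_cases hz : wf n a (i : ℕ) ((∑ k, mstar k) + (i : ℕ)) (fun k => mstar k)
            (Efull n a (⟨0, by omega⟩ : Fin n) (i' : ℕ) m) = 0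
        · rw [hz, zero_mul]
        · obtain ⟨d, hMd, hId⟩ :=
            wf_Efull_exists ha (by omega) _ (i : ℕ) mstar (i' : ℕ) m hz
          rcases Nat.eq_zero_or_pos d with hd0 | hdpos
          · subst hd0
            rw [Nat.mul_zero, Nat.add_zero] at hId
            exact absurd (Fin.ext hId) hne
          · have hpos : 0 < (n - a) * d := Nat.mul_pos (by omega) hdpos
            have hgt : (i : ℕ) < (i' : ℕ) := by omega
            have hi' : (i' : ℕ) < n - 1 := i'.isLt
            have hKlt : (n - 1) - (i' : ℕ) < K := by omega
            have hzero := IH ((n - 1) - (i' : ℕ)) hKlt i' le_rfl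
            rw [hzero, coeff_zero, zero_mul, mul_zero]
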